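/- Let P ∈ ℝ^{U×L}, A ∈ ℝ^{m×U}, let S, S̃ ∈ ℝ^{L×L} be positive definite, and let ε ∈ (0,1/2). If S̃ ≈_ε S, then A·(P S̃⁻¹ Pᵀ)^{∘2}·Aᵀ ≈_{2ε} A·(P S⁻¹ Pᵀ)^{∘2}·Aᵀ. -/

import Mathlib

open Matrix

section Aux

variable {k : Type*} [Fintype k]

private lemma quad_nonneg {M : Matrix k k ℝ} (h : M.PosSemidef) (x : k → ℝ) :
    0 ≤ x ⬝ᵥ M.mulVec x := by simpa using h.dotProduct_mulVec_nonneg x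

private lemma quad_symm {M : Matrix k k ℝ} (h : M.IsHermitian) (x y : k → ℝ) :
    x ⬝ᵥ M.mulVec y = y ⬝ᵥ M.mulVec x := by
  rw [dotProduct_mulVec, ← mulVec_transpose]
  have : Mᵀ = M := by
    have := h; rwa [IsHermitian, conjTranspose_eq_transpose_of_trivial] at this
  rw [this, dotProduct_comm]

/-- Cauchy–Schwarz for a PSD bilinear form. -/
private lemma cs_psd {M : Matrix k k ℝ} (h : M.PosSemidef) (x y : k → ℝ) :
    (x ⬝ᵥ M.mulVec y) ^ 2 ≤ (x ⬝ᵥ M.mulVec x) * (y ⬝ᵥ M.mulVec y) := by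
  set a := x ⬝ᵥ M.mulVec x
  set b := x ⬝ᵥ M.mulVec y
  set c := y ⬝ᵥ M.mulVec y
  have key : ∀ t : ℝ, 0 ≤ a * (t * t) + (2 * b) * t + c := by
    intro t
    have h0 := quad_nonneg h (t • x + y)
    have hsym := quad_symm h.1 x y
    simp only [mulVec_add, mulVec_smul, dotProduct_add, add_dotProduct,
      smul_dotProduct, dotProduct_smul, smul_eq_mul] at h0
    calc (0:ℝ) ≤ _ := h0
      _ = a * (t * t) + (2*b) * t + c := by
          rw [show y ⬝ᵥ M.mulVec x = b from (quad_symm h.1 x y).symm]; ring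
  have hd := discrim_le_zero key
  rw [discrim] at hd
  nlinarith [hd]

private lemma inv_quad_le [DecidableEq k] {S St : Matrix k k ℝ} (hS : S.PosDef) (hSt : St.PosDef)
    {c : ℝ} (hc : 0 < c) (h : ∀ x, x ⬝ᵥ St.mulVec x ≤ c * (x ⬝ᵥ S.mulVec x)) (x : k → ℝ) :
    x ⬝ᵥ S⁻¹.mulVec x ≤ c * (x ⬝ᵥ St⁻¹.mulVec x) := by
  have hSinv := hS.posSemidef.inv
  have hStinv := hSt.posSemidef.inv
  set y := S⁻¹.mulVec x with hy
  set z := St⁻¹.mulVec x with hz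
  have hSy : S.mulVec y = x := by
    rw [hy, mulVec_mulVec, mul_nonsing_inv _ hS.det_pos.ne'.isUnit, one_mulVec]
  have hStz : St.mulVec z = x := by
    rw [hz, mulVec_mulVec, mul_nonsing_inv _ hSt.det_pos.ne'.isUnit, one_mulVec]
  set a := x ⬝ᵥ S⁻¹.mulVec x with ha
  have ha' : a = y ⬝ᵥ S.mulVec y := by rw [ha, hSy, dotProduct_comm]
  have hq : x ⬝ᵥ St⁻¹.mulVec x = z ⬝ᵥ St.mulVec z := by rw [hStz, dotProduct_comm]
  have hcross : z ⬝ᵥ St.mulVec y = a := by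
    rw [quad_symm hSt.isHermitian, hStz, ha, dotProduct_comm]
  have hcs := cs_psd hSt.posSemidef z y
  rw [hcross] at hcs
  have hyy : y ⬝ᵥ St.mulVec y ≤ c * a := by
    have := h y; rwa [← ha'] at this
  have hq0 : 0 ≤ x ⬝ᵥ St⁻¹.mulVec x := quad_nonneg hStinv x
  have ha0 : 0 ≤ a := quad_nonneg hSinv x
  rcases eq_or_lt_of_le ha0 with h0 | h0
  · rw [← h0]; positivity
  · have hzz : 0 ≤ z ⬝ᵥ St.mulVec z := quad_nonneg hSt.posSemidef z
    have hxz : x ⬝ᵥ z = z ⬝ᵥ St.mulVec z := by rw [dotProduct_comm]; rw [← hStz]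
    have h1 : a ^ 2 ≤ (x ⬝ᵥ z) * (c * a) := by
      calc a ^ 2 ≤ (z ⬝ᵥ St.mulVec z) * (y ⬝ᵥ St.mulVec y) := hcs
        _ ≤ (z ⬝ᵥ St.mulVec z) * (c * a) := mul_le_mul_of_nonneg_left hyy hzz
        _ = (x ⬝ᵥ z) * (c * a) := by rw [hxz]
    nlinarith [h1, h0]

private lemma quad_expand (M : Matrix k k ℝ) (x : k → ℝ) :
    x ⬝ᵥ M.mulVec x = ∑ i, ∑ j, x i * M i j * x j := by
  simp only [dotProduct, mulVec, Finset.mul_sum]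
  exact Finset.sum_congr rfl fun i _ => Finset.sum_congr rfl fun j _ => by ring

private lemma herm_smul {M : Matrix k k ℝ} (h : M.IsHermitian) (c : ℝ) :
    (c • M).IsHermitian := by
  apply IsHermitian.ext
  intro i j
  simp only [Matrix.smul_apply, star_trivial, smul_eq_mul]
  rw [show M j i = M i j from by simpa using h.apply i j]

private lemma psd_smul {M : Matrix k k ℝ} (h : M.PosSemidef) {c : ℝ} (hc : 0 ≤ c) :
    (c • M).PosSemidef :=
  .of_dotProduct_mulVec_nonneg (herm_smul h.1 c) fun x => by
    simp only [smul_mulVec, dotProduct_smul, smul_eq_mul]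
    exact mul_nonneg hc (h.dotProduct_mulVec_nonneg x)

/-- Schur product theorem over ℝ. -/
private lemma schur_psd [DecidableEq k] {M N : Matrix k k ℝ}
    (hM : M.PosSemidef) (hN : N.PosSemidef) : (M ⊙ N).PosSemidef := by
  exact hM.hadamard hN

private lemma congr_quad {m' : Type*} [Fintype m'] (B : Matrix m' k ℝ) (M : Matrix k k ℝ)
    (x : m' → ℝ) :
    x ⬝ᵥ (B * M * Bᵀ).mulVec x = (Bᵀ.mulVec x) ⬝ᵥ M.mulVec (Bᵀ.mulVec x) := by
  rw [← mulVec_mulVec, ← mulVec_mulVec, dotProduct_mulVec, ← mulVec_transpose, mulVec_transpose]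

end Aux

theorem stmt_7 {U L m : ℕ} (P : Matrix (Fin U) (Fin L) ℝ) (A : Matrix (Fin m) (Fin U) ℝ)
    (S St : Matrix (Fin L) (Fin L) ℝ) (hS : S.PosDef) (hSt : St.PosDef)
    (ε : ℝ) (hε : ε ∈ Set.Ioo (0:ℝ) (1/2))
    (happrox : ∀ x : Fin L → ℝ,
      Real.exp (-ε) * (x ⬝ᵥ S.mulVec x) ≤ x ⬝ᵥ St.mulVec x ∧
      x ⬝ᵥ St.mulVec x ≤ Real.exp ε * (x ⬝ᵥ S.mulVec x)) :
    ∀ x : Fin m → ℝ,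
      Real.exp (-(2*ε)) * (x ⬝ᵥ (A * ((P * S⁻¹ * Pᵀ) ⊙ (P * S⁻¹ * Pᵀ)) * Aᵀ).mulVec x)
        ≤ x ⬝ᵥ (A * ((P * St⁻¹ * Pᵀ) ⊙ (P * St⁻¹ * Pᵀ)) * Aᵀ).mulVec x ∧
      x ⬝ᵥ (A * ((P * St⁻¹ * Pᵀ) ⊙ (P * St⁻¹ * Pᵀ)) * Aᵀ).mulVec x
        ≤ Real.exp (2*ε) * (x ⬝ᵥ (A * ((P * S⁻¹ * Pᵀ) ⊙ (P * S⁻¹ * Pᵀ)) * Aᵀ).mulVec x) := by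
  -- quadratic form comparison for the inverses
  have hinv_ub : ∀ x : Fin L → ℝ,
      x ⬝ᵥ St⁻¹.mulVec x ≤ Real.exp ε * (x ⬝ᵥ S⁻¹.mulVec x) := by
    intro x
    have h := inv_quad_le hSt hS (Real.exp_pos ε) (fun y => by
      have := (happrox y).1
      have h2 : y ⬝ᵥ S.mulVec y ≤ Real.exp ε * (y ⬝ᵥ St.mulVec y) := by
        rw [Real.exp_neg] at this
        have hpos := Real.exp_pos ε
        rw [inv_mul_le_iff₀ hpos] at this
        linarith [this]
      exact h2) x
    exact h
  have hinv_lb : ∀ x : Fin L → ℝ,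
      Real.exp (-ε) * (x ⬝ᵥ S⁻¹.mulVec x) ≤ x ⬝ᵥ St⁻¹.mulVec x := by
    intro x
    have h := inv_quad_le hS hSt (Real.exp_pos ε) (fun y => (happrox y).2) x
    rw [Real.exp_neg, inv_mul_le_iff₀ (Real.exp_pos ε)]
    · linarith [h]
  -- congruence by P
  set N := P * S⁻¹ * Pᵀ with hN
  set Nt := P * St⁻¹ * Pᵀ with hNt
  have hNsd : N.PosSemidef := by
    have := (hS.posSemidef.inv).mul_mul_conjTranspose_same P
    rwa [conjTranspose_eq_transpose_of_trivial] at this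
  have hNtsd : Nt.PosSemidef := by
    have := (hSt.posSemidef.inv).mul_mul_conjTranspose_same P
    rwa [conjTranspose_eq_transpose_of_trivial] at this
  have hqN_lb : ∀ y : Fin U → ℝ,
      Real.exp (-ε) * (y ⬝ᵥ N.mulVec y) ≤ y ⬝ᵥ Nt.mulVec y := by
    intro y
    rw [hN, hNt, congr_quad, congr_quad]
    exact hinv_lb _
  have hqN_ub : ∀ y : Fin U → ℝ,
      y ⬝ᵥ Nt.mulVec y ≤ Real.exp ε * (y ⬝ᵥ N.mulVec y) := by
    intro y
    rw [hN, hNt, congr_quad, congr_quad]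
    exact hinv_ub _
  -- PSD differences
  have hD1 : (Nt - Real.exp (-ε) • N).PosSemidef := by
    refine .of_dotProduct_mulVec_nonneg ((hNtsd.1).sub (herm_smul hNsd.1 _)) fun x => ?_
    have := hqN_lb x
    simp only [star_trivial, sub_mulVec, smul_mulVec, dotProduct_sub,
      dotProduct_smul, smul_eq_mul]
    linarith
  have hD2 : ((Real.exp ε) • N - Nt).PosSemidef := by
    refine .of_dotProduct_mulVec_nonneg (((herm_smul hNsd.1 _)).sub hNtsd.1) fun x => ?_
    have := hqN_ub x
    simp only [star_trivial, sub_mulVec, smul_mulVec, dotProduct_sub,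
      dotProduct_smul, smul_eq_mul]
    linarith
  have hsmN1 : ((Real.exp (-ε)) • N).PosSemidef := psd_smul hNsd (by positivity)
  have hsmN2 : ((Real.exp ε) • N).PosSemidef := psd_smul hNsd (by positivity)
  -- Hadamard square comparison
  have hE1 : (Nt ⊙ Nt - (Real.exp (-(2*ε))) • (N ⊙ N)).PosSemidef := by
    have h := (schur_psd hNtsd hD1).add (schur_psd hD1 hsmN1)
    have heq : Nt ⊙ Nt - (Real.exp (-(2*ε))) • (N ⊙ N)
        = Nt ⊙ (Nt - Real.exp (-ε) • N) + (Nt - Real.exp (-ε) • N) ⊙ (Real.exp (-ε) • N) := by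
      have he : Real.exp (-(2*ε)) = Real.exp (-ε) * Real.exp (-ε) := by
        rw [← Real.exp_add]; ring_nf
      ext i j
      simp only [hadamard_apply, Matrix.sub_apply, Matrix.smul_apply, Matrix.add_apply, smul_eq_mul, he]
      ring
    rw [heq]; exact h
  have hE2 : ((Real.exp (2*ε)) • (N ⊙ N) - Nt ⊙ Nt).PosSemidef := by
    have h := (schur_psd hsmN2 hD2).add (schur_psd hD2 hNtsd)
    have heq : (Real.exp (2*ε)) • (N ⊙ N) - Nt ⊙ Nt
        = (Real.exp ε • N) ⊙ (Real.exp ε • N - Nt) + (Real.exp ε • N - Nt) ⊙ Nt := by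
      have he : Real.exp (2*ε) = Real.exp ε * Real.exp ε := by
        rw [← Real.exp_add]; ring_nf
      ext i j
      simp only [hadamard_apply, Matrix.sub_apply, Matrix.smul_apply, Matrix.add_apply, smul_eq_mul, he]
      ring
    rw [heq]; exact h
  intro x
  rw [congr_quad A (Nt ⊙ Nt) x, congr_quad A (N ⊙ N) x]
  set y := Aᵀ.mulVec x
  constructor
  · have := quad_nonneg hE1 y
    simp only [sub_mulVec, smul_mulVec, dotProduct_sub, dotProduct_smul,
      smul_eq_mul] at this
    linarith
  · have := quad_nonneg hE2 y
    simp only [sub_mulVec, smul_mulVec, dotProduct_sub, dotProduct_smul,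
      smul_eq_mul] at this
    linarith
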